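/- arXiv:2201.05416 — 5 statements merged into one kernel-verified Lean document; each statement's English description precedes it below -/
import Mathlib

section
/- Let Δ > 0 be a real number and let (Σₙ)_{n∈ℕ} be a sequence of subsets of the nonnegative reals [0,∞) such that for every n ∈ ℕ one has Σₙ \ {0} = {x + Δ : x ∈ Σ_{n+1}}. Then: (i) for every n, Σₙ ⊆ {Δ·m : m ∈ ℕ}; (ii) for all n, m ∈ ℕ, Δ·m ∈ Σₙ if and only if 0 ∈ Σ_{n+m}; (iii) if in addition 0 ∈ Σₙ for every n, then Σₙ = {Δ·m : m ∈ ℕ} for every n. -/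
/-- **Set-theoretic bootstrap for abstract Landau levels.**
If `Δ > 0` and `(S n)` is a sequence of subsets of `[0,∞)` with
`S n \ {0} = S (n+1) + Δ` for every `n`, then each `S n` is contained in the
discrete set `Δ·ℕ`; moreover `Δ·m ∈ S n ↔ 0 ∈ S (n+m)`, and if `0 ∈ S n`
for every `n` then `S n = Δ·ℕ` for every `n`. -/
theorem landau_levels_bootstrap (Δ : ℝ) (hΔ : 0 < Δ) (S : ℕ → Set ℝ)
    (hnonneg : ∀ n, S n ⊆ Set.Ici (0 : ℝ))
    (hshift : ∀ n, S n \ {0} = (fun x => x + Δ) '' S (n + 1)) :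
    (∀ n, S n ⊆ {x : ℝ | ∃ m : ℕ, x = Δ * m}) ∧
    (∀ n m : ℕ, (Δ * m ∈ S n ↔ (0 : ℝ) ∈ S (n + m))) ∧
    ((∀ n, (0 : ℝ) ∈ S n) → ∀ n, S n = {x : ℝ | ∃ m : ℕ, x = Δ * m}) := by
  -- down step: nonzero elements descend
  have hdown : ∀ n x, x ∈ S n → x ≠ 0 → x - Δ ∈ S (n + 1) := by
    intro n x hx hx0
    have : x ∈ S n \ {0} := ⟨hx, hx0⟩
    rw [hshift n] at this
    obtain ⟨y, hy, hyx⟩ := this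
    simpa [← hyx] using hy
  have hup : ∀ n x, x ∈ S (n + 1) → x + Δ ∈ S n := by
    intro n x hx
    have : x + Δ ∈ S n \ {0} := by
      rw [hshift n]; exact ⟨x, hx, rfl⟩
    exact this.1
  -- (i)
  have key : ∀ k : ℕ, ∀ n : ℕ, ∀ x, x ∈ S n → x ≤ Δ * k → ∃ m : ℕ, x = Δ * m := by
    intro k
    induction k with
    | zero =>
      intro n x hx hle
      have h0 : (0:ℝ) ≤ x := hnonneg n hx
      have hle' : x ≤ 0 := by simpa using hle
      exact ⟨0, by push_cast; linarith⟩
    | succ k ih =>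
      intro n x hx hle
      by_cases hx0 : x = 0
      · exact ⟨0, by simp [hx0]⟩
      · have h1 : x - Δ ∈ S (n + 1) := hdown n x hx hx0
        have h2 : x - Δ ≤ Δ * k := by push_cast at hle ⊢; linarith
        obtain ⟨m, hm⟩ := ih (n + 1) (x - Δ) h1 h2
        exact ⟨m + 1, by push_cast; linarith⟩
  have part1 : ∀ n, S n ⊆ {x : ℝ | ∃ m : ℕ, x = Δ * m} := by
    intro n x hx
    obtain ⟨k, hk⟩ := exists_nat_ge (x / Δ)
    exact key k n x hx (by rw [div_le_iff₀ hΔ] at hk; linarith)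
  have part2 : ∀ n m : ℕ, (Δ * m ∈ S n ↔ (0 : ℝ) ∈ S (n + m)) := by
    intro n m
    induction m generalizing n with
    | zero => simp
    | succ m ih =>
      constructor
      · intro h
        have hne : Δ * ((m : ℝ) + 1) ≠ 0 := by positivity
        have hd := hdown n _ (by push_cast at h ⊢; exact h) hne
        have h2 : Δ * (m : ℝ) ∈ S (n + 1) := by
          have e : Δ * ((m:ℝ) + 1) - Δ = Δ * m := by ring
          rwa [e] at hd
        have := (ih (n + 1)).mp h2
        rwa [show n + 1 + m = n + (m + 1) by omega] at this
      · intro h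
        have h2 : (0:ℝ) ∈ S (n + 1 + m) := by
          rwa [show n + 1 + m = n + (m + 1) by omega]
        have h3 : Δ * (m : ℝ) ∈ S (n + 1) := (ih (n + 1)).mpr h2
        have := hup n _ h3
        have heq : Δ * (m:ℝ) + Δ = Δ * ((m:ℕ) + 1 : ℕ) := by push_cast; ring
        rwa [heq] at this
  refine ⟨part1, part2, ?_⟩
  intro h0 n
  apply Set.Subset.antisymm (part1 n)
  rintro x ⟨m, rfl⟩
  exact (part2 n m).mpr (h0 (n + m))
end

section
/- Let A be a unital C*-algebra, let p and q be projections in A (self-adjoint idempotents), and let T ∈ A satisfy T·p = T = q·T, and suppose that both T*T + (1 − p) and TT* + (1 − q) are invertible in A. Then the element v := T·(T*T + (1 − p))^{-1/2} satisfies v*v = p and vv* = q; in particular, p and q are Murray–von Neumann equivalent. -/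
open scoped NNReal

/-- If `b` commutes with `x` and `star x`, it commutes with `cfc f x` (complex cfc). -/
lemma commute_cfc_complex {A : Type*} [CStarAlgebra A] {b x : A}
    (hbx : Commute b x) (hbx' : Commute b (star x)) (f : ℂ → ℂ) :
    Commute b (cfc f x) := by
  by_cases hx : IsStarNormal x
  · by_cases hf : ContinuousOn f (spectrum ℂ x)
    · rw [cfc_apply f x hx hf]
      have hmem : cfcHom hx ⟨_, hf.restrict⟩ ∈ StarAlgebra.elemental ℂ x := by
        rw [cfcHom_eq_of_isStarNormal]
        exact SetLike.coe_mem _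
      refine StarAlgebra.elemental.induction_on (R := ℂ) (P := fun u _ => Commute b u) hmem
        hbx hbx' (fun r => (Algebra.commutes r b).symm)
        (fun u _ v _ hu hv => hu.add_right hv)
        (fun u _ v _ hu hv => hu.mul_right hv) ?_
      intro s hs hcomm v hv
      have hc : IsClosed {y : A | b * y = y * b} :=
        isClosed_eq (continuous_const.mul continuous_id) (continuous_id.mul continuous_const)
      exact hc.closure_subset_iff.mpr (fun u hu => hcomm u hu) hv
    · rw [cfc_apply_of_not_continuousOn x hf]
      exact Commute.zero_right b
  · rw [cfc_apply_of_not_predicate x hx]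
    exact Commute.zero_right b

/-- If `b` commutes with a nonnegative `x`, it commutes with `CFC.sqrt x`. -/
lemma commute_cfc_sqrt {A : Type*} [CStarAlgebra A] [PartialOrder A] [StarOrderedRing A]
    {b x : A} (hx : (0 : A) ≤ x) (hbx : Commute b x) :
    Commute b (CFC.sqrt x) := by
  have hsa : IsSelfAdjoint x := .of_nonneg hx
  have h1 : CFC.sqrt x = cfc (fun y : ℝ≥0 => NNReal.sqrt y) x := by
    rw [CFC.sqrt, cfcₙ_eq_cfc]
  rw [h1, cfc_nnreal_eq_real _ _ hx, cfc_real_eq_complex]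
  exact commute_cfc_complex hbx (hsa.star_eq.symm ▸ hbx) _

/-- **Murray–von Neumann equivalence from an invertible intertwiner.**
In a unital C*-algebra `A`, if `p, q` are projections, `T ∈ A` satisfies
`T·p = T = q·T`, and both `T*T + (1-p)` and `TT* + (1-q)` are invertible,
then `v := T·(T*T + (1-p))^{-1/2}` is a partial isometry with `v*v = p` and
`vv* = q`; in particular `p` and `q` are Murray–von Neumann equivalent. -/
theorem murray_von_neumann_of_intertwiner
    {A : Type*} [CStarAlgebra A] [PartialOrder A] [StarOrderedRing A]
    (p q T : A)
    (hp : IsSelfAdjoint p) (hp2 : p * p = p)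
    (hq : IsSelfAdjoint q) (hq2 : q * q = q)
    (hTp : T * p = T) (hqT : q * T = T)
    (hinv₁ : IsUnit (star T * T + (1 - p)))
    (hinv₂ : IsUnit (T * star T + (1 - q))) :
    star (T * CFC.sqrt (Ring.inverse (star T * T + (1 - p)))) *
        (T * CFC.sqrt (Ring.inverse (star T * T + (1 - p)))) = p ∧
      (T * CFC.sqrt (Ring.inverse (star T * T + (1 - p)))) *
        star (T * CFC.sqrt (Ring.inverse (star T * T + (1 - p)))) = q := by
  set s : A := star T * T + (1 - p) with hs_def
  set t : A := T * star T + (1 - q) with ht_def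
  set r : A := CFC.sqrt (Ring.inverse s) with hr_def
  -- basic intertwining consequences
  have hpT : p * star T = star T := by
    have := congrArg star hTp
    rwa [star_mul, hp.star_eq] at this
  have hTq : star T * q = star T := by
    have := congrArg star hqT
    rwa [star_mul, hq.star_eq] at this
  -- positivity of 1 - p and s
  have h1p_sq : (1 - p) * (1 - p) = 1 - p := by
    simp only [sub_mul, mul_sub, one_mul, mul_one, hp2]
    abel
  have h1p : (0 : A) ≤ 1 - p := by
    have : (1 - p) = star (1 - p) * (1 - p) := by
      rw [star_sub, star_one, hp.star_eq, h1p_sq]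
    rw [this]
    exact star_mul_self_nonneg _
  have hs_nonneg : (0 : A) ≤ s := add_nonneg (star_mul_self_nonneg T) h1p
  have hs_sa : IsSelfAdjoint s := .of_nonneg hs_nonneg
  -- the inverse of s is selfadjoint and nonnegative
  have hinv_sa : star (Ring.inverse s) = Ring.inverse s := by
    rw [← Ring.inverse_star, hs_sa.star_eq]
  have hinv_nonneg : (0 : A) ≤ Ring.inverse s := by
    have h1 : (0 : A) ≤ star (Ring.inverse s) * s * Ring.inverse s :=
      star_left_conjugate_nonneg hs_nonneg _
    have h2 : star (Ring.inverse s) * s * Ring.inverse s = Ring.inverse s := by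
      rw [hinv_sa, Ring.inverse_mul_cancel _ hinv₁, one_mul]
    rwa [h2] at h1
  -- key commutation identities
  have hsp : s * p = star T * T := by
    rw [hs_def, add_mul, mul_assoc, hTp, sub_mul, one_mul, hp2, sub_self, add_zero]
  have hps : p * s = star T * T := by
    rw [hs_def, mul_add, ← mul_assoc, hpT, mul_sub, mul_one, hp2, sub_self, add_zero]
  have hcomm_ps : Commute p s := hps.trans hsp.symm
  have hcomm_p_inv : Commute p (Ring.inverse s) := by
    show p * Ring.inverse s = Ring.inverse s * p
    calc p * Ring.inverse s
        = Ring.inverse s * s * (p * Ring.inverse s) := by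
          rw [Ring.inverse_mul_cancel _ hinv₁, one_mul]
      _ = Ring.inverse s * (s * p) * Ring.inverse s := by simp only [mul_assoc]
      _ = Ring.inverse s * (p * s) * Ring.inverse s := by rw [← hcomm_ps.eq]
      _ = Ring.inverse s * p * (s * Ring.inverse s) := by simp only [mul_assoc]
      _ = Ring.inverse s * p := by rw [Ring.mul_inverse_cancel _ hinv₁, mul_one]
  have hcomm_s_inv : Commute s (Ring.inverse s) :=
    (Ring.mul_inverse_cancel _ hinv₁).trans (Ring.inverse_mul_cancel _ hinv₁).symm
  have hcomm_pr : Commute p r := commute_cfc_sqrt hinv_nonneg hcomm_p_inv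
  have hcomm_sr : Commute s r := commute_cfc_sqrt hinv_nonneg hcomm_s_inv
  have hr_sq : r * r = Ring.inverse s := CFC.sqrt_mul_sqrt_self _ hinv_nonneg
  have hr_sa : star r = r := (IsSelfAdjoint.of_nonneg (CFC.sqrt_nonneg _)).star_eq
  constructor
  · -- v* v = p
    calc star (T * r) * (T * r)
        = r * (star T * T) * r := by
          rw [star_mul, hr_sa]; simp only [mul_assoc]
      _ = r * (s * p) * r := by rw [hsp]
      _ = r * s * (p * r) := by simp only [mul_assoc]
      _ = r * s * (r * p) := by rw [hcomm_pr.eq]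
      _ = r * (s * r) * p := by simp only [mul_assoc]
      _ = r * (r * s) * p := by rw [hcomm_sr.eq]
      _ = r * r * s * p := by simp only [mul_assoc]
      _ = Ring.inverse s * s * p := by rw [hr_sq]
      _ = p := by rw [Ring.inverse_mul_cancel _ hinv₁, one_mul]
  · -- v v* = q
    have hts : T * s = t * T := by
      rw [hs_def, ht_def, mul_add, add_mul, ← mul_assoc, mul_sub, sub_mul,
        mul_one, one_mul, hTp, hqT]
    have hTinv : T * Ring.inverse s = Ring.inverse t * T := by
      calc T * Ring.inverse s
          = Ring.inverse t * t * (T * Ring.inverse s) := by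
            rw [Ring.inverse_mul_cancel _ hinv₂, one_mul]
        _ = Ring.inverse t * (t * T) * Ring.inverse s := by simp only [mul_assoc]
        _ = Ring.inverse t * (T * s) * Ring.inverse s := by rw [hts]
        _ = Ring.inverse t * T * (s * Ring.inverse s) := by simp only [mul_assoc]
        _ = Ring.inverse t * T := by rw [Ring.mul_inverse_cancel _ hinv₁, mul_one]
    have htq : t * q = T * star T := by
      rw [ht_def, add_mul, mul_assoc, hTq, sub_mul, one_mul, hq2, sub_self, add_zero]
    calc (T * r) * star (T * r)
        = T * (r * r) * star T := by
          rw [star_mul, hr_sa]; simp only [mul_assoc]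
      _ = T * Ring.inverse s * star T := by rw [hr_sq]
      _ = Ring.inverse t * T * star T := by rw [hTinv]
      _ = Ring.inverse t * (t * q) := by rw [htq]; simp only [mul_assoc]
      _ = q := by rw [← mul_assoc, Ring.inverse_mul_cancel _ hinv₂, one_mul]
end

section
/- Let H₁ and H₂ be complex Hilbert spaces, let b₊ ≤ 0 < b₋ be real numbers, and let a : H₁ → H₂ be a bounded linear operator such that: h := a*a − b₊·1 is a positive operator on H₁ (i.e., a*a ≥ b₊·1 rearranged so that h ≥ 0); ⟨a a* ξ, ξ⟩ ≥ b₋·‖ξ‖² for all ξ ∈ H₂; and ker a ≠ {0}. Then −b₊ belongs to σ(h), σ(h) ⊆ {−b₊} ∪ [b₋ − b₊, ∞), and hence −b₊ is the minimum of σ(h) and is an isolated point of σ(h), with the interval (−b₊, b₋ − b₊) disjoint from σ(h). -/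
open ContinuousLinearMap
open scoped InnerProductSpace

/-- A self-adjoint operator on a complex Hilbert space that is bounded below
in norm is invertible. -/
lemma LLL.isUnit_of_selfAdjoint_bddBelow {H : Type*} [NormedAddCommGroup H]
    [InnerProductSpace ℂ H] [CompleteSpace H] (S : H →L[ℂ] H)
    (hsa : IsSelfAdjoint S) {c : ℝ} (hc : 0 < c)
    (hbdd : ∀ ξ : H, c * ‖ξ‖ ≤ ‖S ξ‖) : IsUnit S := by
  rw [ContinuousLinearMap.isUnit_iff_bijective]
  have hSadj : ContinuousLinearMap.adjoint S = S := by
    rw [← ContinuousLinearMap.star_eq_adjoint]; exact hsa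
  have hker0 : ∀ x : H, S x = 0 → x = 0 := by
    intro x hx
    have h1 := hbdd x
    rw [hx, norm_zero] at h1
    have h2 : ‖x‖ = 0 := le_antisymm (by nlinarith [norm_nonneg x]) (norm_nonneg x)
    exact norm_eq_zero.mp h2
  have hinj : Function.Injective S := by
    intro x y hxy
    have h0 : S (x - y) = 0 := by rw [map_sub, hxy, sub_self]
    exact sub_eq_zero.mp (hker0 _ h0)
  refine ⟨hinj, ?_⟩
  -- closed range
  have hanti : AntilipschitzWith (⟨c, hc.le⟩ : NNReal)⁻¹ S := by
    apply AddMonoidHomClass.antilipschitz_of_bound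
    intro x
    change ‖x‖ ≤ c⁻¹ * ‖S x‖
    calc ‖x‖ = c⁻¹ * (c * ‖x‖) := by field_simp
    _ ≤ (c : ℝ)⁻¹ * ‖S x‖ := mul_le_mul_of_nonneg_left (hbdd x) (by positivity)
  have hclosed : IsClosed (Set.range S) := hanti.isClosed_range S.uniformContinuous
  -- dense range
  have hdense : (LinearMap.range (S : H →ₗ[ℂ] H)).topologicalClosure = ⊤ := by
    rw [Submodule.topologicalClosure_eq_top_iff, Submodule.eq_bot_iff]
    intro v hv
    have hv' : ∀ ξ : H, ⟪S ξ, v⟫_ℂ = 0 := fun ξ =>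
      (Submodule.mem_orthogonal _ v).mp hv (S ξ) ⟨ξ, rfl⟩
    have hSv : S v = 0 := by
      have h3 := hv' (S v)
      have h2 := ContinuousLinearMap.adjoint_inner_left S v (S v)
      rw [hSadj] at h2
      rw [h2] at h3
      exact inner_self_eq_zero.mp h3
    exact hker0 v hSv
  have hrange : LinearMap.range (S : H →ₗ[ℂ] H) = ⊤ := by
    have h1 : ((LinearMap.range (S : H →ₗ[ℂ] H) : Submodule ℂ H) : Set H) = Set.range S := by
      ext x; simp [LinearMap.mem_range, Set.mem_range]
    have h2 : IsClosed ((LinearMap.range (S : H →ₗ[ℂ] H) : Submodule ℂ H) : Set H) := h1 ▸ hclosed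
    rw [← h2.submodule_topologicalClosure_eq]
    exact hdense
  intro y
  have : y ∈ LinearMap.range (S : H →ₗ[ℂ] H) := hrange ▸ Submodule.mem_top
  exact this

set_option maxHeartbeats 1000000

/-- **Isolated lowest Landau level, Hilbert space version.**
Let `bp ≤ 0 < bm` (playing the roles of `b₊` and `b₋`) and let `a : H₁ → H₂` be
a bounded operator between complex Hilbert spaces such that `h := a*a - b₊·1`
is positive, `⟨aa* ξ, ξ⟩ ≥ b₋·‖ξ‖²`, and `ker a ≠ 0`.  Then `-b₊ ∈ σ(h)`,
`σ(h) ⊆ {-b₊} ∪ [b₋ - b₊, ∞)`, the open interval `(-b₊, b₋ - b₊)` misses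
`σ(h)`, and `-b₊` is the minimum of `σ(h)`; hence `-b₊` is an isolated point
of `σ(h)` (the lowest Landau level). -/
theorem lowest_landau_level_isolated
    {H₁ H₂ : Type*} [NormedAddCommGroup H₁] [InnerProductSpace ℂ H₁] [CompleteSpace H₁]
    [NormedAddCommGroup H₂] [InnerProductSpace ℂ H₂] [CompleteSpace H₂]
    (bp bm : ℝ) (hbp : bp ≤ 0) (hbm : 0 < bm)
    (a : H₁ →L[ℂ] H₂)
    (hpos : ∀ ξ : H₁,
      0 ≤ (⟪((adjoint a ∘L a) - (bp : ℂ) • (1 : H₁ →L[ℂ] H₁)) ξ, ξ⟫_ℂ).re)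
    (hbelow : ∀ ξ : H₂, bm * ‖ξ‖ ^ 2 ≤ (⟪(a ∘L adjoint a) ξ, ξ⟫_ℂ).re)
    (hker : LinearMap.ker (a : H₁ →ₗ[ℂ] H₂) ≠ ⊥) :
    ((-bp : ℝ) : ℂ) ∈ spectrum ℂ ((adjoint a ∘L a) - (bp : ℂ) • (1 : H₁ →L[ℂ] H₁)) ∧
    spectrum ℂ ((adjoint a ∘L a) - (bp : ℂ) • (1 : H₁ →L[ℂ] H₁)) ⊆
      (fun r : ℝ => (r : ℂ)) '' ({-bp} ∪ Set.Ici (bm - bp)) ∧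
    (fun r : ℝ => (r : ℂ)) '' Set.Ioo (-bp) (bm - bp) ∩
      spectrum ℂ ((adjoint a ∘L a) - (bp : ℂ) • (1 : H₁ →L[ℂ] H₁)) = ∅ ∧
    IsLeast {r : ℝ | (r : ℂ) ∈
      spectrum ℂ ((adjoint a ∘L a) - (bp : ℂ) • (1 : H₁ →L[ℂ] H₁))} (-bp) := by
  set T : H₁ →L[ℂ] H₁ := adjoint a ∘L a with hT_def
  set h : H₁ →L[ℂ] H₁ := T - (bp : ℂ) • (1 : H₁ →L[ℂ] H₁) with hh_def
  have hTsa : IsSelfAdjoint T := by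
    rw [IsSelfAdjoint, ContinuousLinearMap.star_eq_adjoint, hT_def,
      ContinuousLinearMap.adjoint_comp, ContinuousLinearMap.adjoint_adjoint]
  have hhsa : IsSelfAdjoint h := by
    rw [hh_def]
    apply hTsa.sub
    rw [IsSelfAdjoint, star_smul, star_one, Complex.star_def, Complex.conj_ofReal]
  set K : Submodule ℂ H₁ := LinearMap.ker (a : H₁ →ₗ[ℂ] H₂) with hK_def
  have hKclosed : IsClosed (K : Set H₁) := ContinuousLinearMap.isClosed_ker a
  haveI : CompleteSpace K := hKclosed.completeSpace_coe
  -- T vanishes on K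
  have hTK : ∀ x ∈ K, T x = 0 := by
    intro x hx
    have hax : a x = 0 := hx
    simp [hT_def, ContinuousLinearMap.comp_apply, hax]
  -- range of adjoint a lies in Kᗮ
  have hadjK : ∀ η : H₂, adjoint a η ∈ Kᗮ := by
    intro η
    rw [Submodule.mem_orthogonal]
    intro u hu
    rw [ContinuousLinearMap.adjoint_inner_right]
    have hau : a u = 0 := hu
    simp [hau]
  -- lower bound for a on Kᗮ
  have hKb : ∀ ξ ∈ Kᗮ, bm * ‖ξ‖ ^ 2 ≤ ‖a ξ‖ ^ 2 := by
    have hRng : ∀ η : H₂, bm * ‖adjoint a η‖ ^ 2 ≤ ‖a (adjoint a η)‖ ^ 2 := by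
      intro η
      have h1 : (⟪(a ∘L adjoint a) η, η⟫_ℂ).re = ‖adjoint a η‖ ^ 2 := by
        rw [ContinuousLinearMap.comp_apply,
          ← ContinuousLinearMap.adjoint_inner_right a (adjoint a η) η,
          inner_self_eq_norm_sq_to_K]
        simp [← Complex.ofReal_pow]
      have h2 := hbelow η
      rw [h1] at h2
      have h3 : ‖adjoint a η‖ ^ 2 ≤ ‖a (adjoint a η)‖ * ‖η‖ := by
        calc ‖adjoint a η‖ ^ 2 = (⟪(a ∘L adjoint a) η, η⟫_ℂ).re := h1.symm
        _ ≤ ‖⟪(a ∘L adjoint a) η, η⟫_ℂ‖ := Complex.re_le_norm _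
        _ ≤ ‖(a ∘L adjoint a) η‖ * ‖η‖ := norm_inner_le_norm _ _
        _ = ‖a (adjoint a η)‖ * ‖η‖ := by rw [ContinuousLinearMap.comp_apply]
      nlinarith [norm_nonneg (a (adjoint a η)), norm_nonneg η,
        norm_nonneg (adjoint a η), sq_nonneg (‖a (adjoint a η)‖ - bm * ‖η‖)]
    have hCclosed : IsClosed {ξ : H₁ | bm * ‖ξ‖ ^ 2 ≤ ‖a ξ‖ ^ 2} := by
      apply isClosed_le
      · exact continuous_const.mul (continuous_norm.pow 2)
      · exact (continuous_norm.comp a.continuous).pow 2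
    have hsub : Kᗮ ≤ (LinearMap.range ((adjoint a : H₂ →L[ℂ] H₁) : H₂ →ₗ[ℂ] H₁)).topologicalClosure := by
      have h1 : (LinearMap.range ((adjoint a : H₂ →L[ℂ] H₁) : H₂ →ₗ[ℂ] H₁))ᗮ ≤ K := by
        intro v hv
        have hv' : ∀ η : H₂, ⟪adjoint a η, v⟫_ℂ = 0 := fun η =>
          (Submodule.mem_orthogonal _ v).mp hv _ ⟨η, rfl⟩
        have h2 := hv' (a v)
        rw [ContinuousLinearMap.adjoint_inner_left] at h2
        exact inner_self_eq_zero.mp h2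
      calc Kᗮ ≤ ((LinearMap.range ((adjoint a : H₂ →L[ℂ] H₁) : H₂ →ₗ[ℂ] H₁))ᗮ)ᗮ := Submodule.orthogonal_le h1
      _ = (LinearMap.range ((adjoint a : H₂ →L[ℂ] H₁) : H₂ →ₗ[ℂ] H₁)).topologicalClosure :=
          Submodule.orthogonal_orthogonal_eq_closure _
    intro ξ hξ
    have hmem := hsub hξ
    have hcl : (((LinearMap.range ((adjoint a : H₂ →L[ℂ] H₁) : H₂ →ₗ[ℂ] H₁)).topologicalClosure : Submodule ℂ H₁) : Set H₁)
        ⊆ {ξ : H₁ | bm * ‖ξ‖ ^ 2 ≤ ‖a ξ‖ ^ 2} := by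
      rw [Submodule.topologicalClosure_coe]
      apply closure_minimal _ hCclosed
      rintro x ⟨η, rfl⟩
      exact hRng η
    exact hcl hmem
  -- the spectral gap statement
  have hgap : ∀ z : ℂ, z ∈ spectrum ℂ h → z = (z.re : ℂ) ∧
      (z.re = -bp ∨ bm - bp ≤ z.re) := by
    intro z hz
    have hre : z = (z.re : ℂ) := hhsa.mem_spectrum_eq_re hz
    refine ⟨hre, ?_⟩
    by_contra hcon
    push_neg at hcon
    obtain ⟨hne, hlt⟩ := hcon
    set μ : ℝ := z.re with hμ_def
    set lam : ℝ := μ + bp with hlam_def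
    have hlam0 : lam ≠ 0 := fun h0 => hne (by rw [hμ_def] at *; linarith)
    have hlamlt : lam < bm := by rw [hlam_def]; linarith
    set S : H₁ →L[ℂ] H₁ := (lam : ℂ) • (1 : H₁ →L[ℂ] H₁) - T with hS_def
    have hSeq : algebraMap ℂ (H₁ →L[ℂ] H₁) z - h = S := by
      rw [Algebra.algebraMap_eq_smul_one, hh_def, hS_def, hre]
      ext x
      simp only [ContinuousLinearMap.sub_apply, ContinuousLinearMap.smul_apply,
        ContinuousLinearMap.one_apply, hlam_def]
      push_cast
      rw [add_smul]
      abel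
    have hSsa : IsSelfAdjoint S := by
      rw [hS_def]
      apply IsSelfAdjoint.sub _ hTsa
      rw [IsSelfAdjoint, star_smul, star_one, Complex.star_def, Complex.conj_ofReal]
    set c : ℝ := min |lam| (bm - lam) with hc_def
    have hcpos : 0 < c := lt_min (abs_pos.mpr hlam0) (by linarith)
    have hc1 : c ≤ |lam| := min_le_left _ _
    have hc2 : c ≤ bm - lam := min_le_right _ _
    have hbdd : ∀ ξ : H₁, c * ‖ξ‖ ≤ ‖S ξ‖ := by
      intro ξ
      obtain ⟨x₀, hx₀, x₁, hx₁, hsum⟩ := K.exists_add_mem_mem_orthogonal ξ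
      have hTx₀ : T x₀ = 0 := hTK x₀ hx₀
      have hTx₁ : T x₁ ∈ Kᗮ := by rw [hT_def]; exact hadjK (a x₁)
      set u : H₁ := (lam : ℂ) • x₀ with hu_def
      set v : H₁ := (lam : ℂ) • x₁ - T x₁ with hv_def
      have hSx : S ξ = u + v := by
        rw [hS_def, hu_def, hv_def]
        simp only [ContinuousLinearMap.sub_apply, ContinuousLinearMap.smul_apply,
          ContinuousLinearMap.one_apply, hsum, map_add, hTx₀, smul_add]
        abel
      have hu_mem : u ∈ K := K.smul_mem _ hx₀
      have hv_mem : v ∈ Kᗮ := Kᗮ.sub_mem (Kᗮ.smul_mem _ hx₁) hTx₁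
      have hinner_uv : ⟪u, v⟫_ℂ = 0 :=
        Submodule.inner_right_of_mem_orthogonal hu_mem hv_mem
      have hinner_x : ⟪x₀, x₁⟫_ℂ = 0 :=
        Submodule.inner_right_of_mem_orthogonal hx₀ hx₁
      have hnormξ : ‖ξ‖ ^ 2 = ‖x₀‖ ^ 2 + ‖x₁‖ ^ 2 := by
        rw [hsum]
        simpa [pow_two] using
          norm_add_sq_eq_norm_sq_add_norm_sq_of_inner_eq_zero x₀ x₁ hinner_x
      have hnormS : ‖S ξ‖ ^ 2 = ‖u‖ ^ 2 + ‖v‖ ^ 2 := by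
        rw [hSx]
        simpa [pow_two] using
          norm_add_sq_eq_norm_sq_add_norm_sq_of_inner_eq_zero u v hinner_uv
      have hnu : ‖u‖ = |lam| * ‖x₀‖ := by
        rw [hu_def, norm_smul, Complex.norm_real, Real.norm_eq_abs]
      have hnv : (bm - lam) * ‖x₁‖ ≤ ‖v‖ := by
        have eT : ⟪T x₁, x₁⟫_ℂ = ⟪a x₁, a x₁⟫_ℂ := by
          rw [hT_def, ContinuousLinearMap.comp_apply,
            ContinuousLinearMap.adjoint_inner_left]
        have e1 : ⟪T x₁ - (lam : ℂ) • x₁, x₁⟫_ℂ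
            = ((‖a x₁‖ ^ 2 - lam * ‖x₁‖ ^ 2 : ℝ) : ℂ) := by
          rw [inner_sub_left, inner_smul_left, eT, inner_self_eq_norm_sq_to_K,
            inner_self_eq_norm_sq_to_K, Complex.conj_ofReal]
          push_cast
          norm_num
        have e2 : ‖a x₁‖ ^ 2 - lam * ‖x₁‖ ^ 2 ≤ ‖v‖ * ‖x₁‖ := by
          calc ‖a x₁‖ ^ 2 - lam * ‖x₁‖ ^ 2
              = (⟪T x₁ - (lam : ℂ) • x₁, x₁⟫_ℂ).re := by rw [e1, Complex.ofReal_re]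
          _ ≤ ‖⟪T x₁ - (lam : ℂ) • x₁, x₁⟫_ℂ‖ := Complex.re_le_norm _
          _ ≤ ‖T x₁ - (lam : ℂ) • x₁‖ * ‖x₁‖ := norm_inner_le_norm _ _
          _ = ‖v‖ * ‖x₁‖ := by rw [hv_def, norm_sub_rev]
        have e3 := hKb x₁ hx₁
        rcases eq_or_lt_of_le (norm_nonneg x₁) with h0 | h0
        · rw [← h0, mul_zero]; exact norm_nonneg v
        · have e4 : (bm - lam) * ‖x₁‖ * ‖x₁‖ ≤ ‖v‖ * ‖x₁‖ := by nlinarith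
          exact le_of_mul_le_mul_right e4 h0
      have hcu : c * ‖x₀‖ ≤ ‖u‖ := by
        rw [hnu]; exact mul_le_mul_of_nonneg_right hc1 (norm_nonneg _)
      have hcv : c * ‖x₁‖ ≤ ‖v‖ :=
        le_trans (mul_le_mul_of_nonneg_right hc2 (norm_nonneg _)) hnv
      have hcu2 : (c * ‖x₀‖) ^ 2 ≤ ‖u‖ ^ 2 :=
        pow_le_pow_left₀ (by positivity) hcu 2
      have hcv2 : (c * ‖x₁‖) ^ 2 ≤ ‖v‖ ^ 2 :=
        pow_le_pow_left₀ (by positivity) hcv 2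
      have hsq : (c * ‖ξ‖) ^ 2 ≤ ‖S ξ‖ ^ 2 := by
        rw [mul_pow] at hcu2 hcv2 ⊢
        rw [hnormS, hnormξ, mul_add]
        exact add_le_add hcu2 hcv2
      have h2 := Real.sqrt_le_sqrt hsq
      rwa [Real.sqrt_sq (by positivity), Real.sqrt_sq (norm_nonneg _)] at h2
    have hUnit : IsUnit S := LLL.isUnit_of_selfAdjoint_bddBelow S hSsa hcpos hbdd
    exact spectrum.mem_iff.mp hz (hSeq ▸ hUnit)
  -- first conclusion : -bp is in the spectrum
  have hmem : ((-bp : ℝ) : ℂ) ∈ spectrum ℂ h := by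
    rw [spectrum.mem_iff]
    intro hU
    have heq : algebraMap ℂ (H₁ →L[ℂ] H₁) ((-bp : ℝ) : ℂ) - h = -T := by
      rw [Algebra.algebraMap_eq_smul_one, hh_def]
      ext x
      simp only [ContinuousLinearMap.sub_apply, ContinuousLinearMap.smul_apply,
        ContinuousLinearMap.one_apply, ContinuousLinearMap.neg_apply,
        Complex.ofReal_neg, neg_smul]
      abel
    rw [heq] at hU
    obtain ⟨ξ₀, hξ₀mem, hξ₀ne⟩ := Submodule.exists_mem_ne_zero_of_ne_bot hker
    have hinj := (ContinuousLinearMap.isUnit_iff_bijective.mp hU).1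
    have hTξ₀ : T ξ₀ = 0 := hTK ξ₀ hξ₀mem
    have : (-T) ξ₀ = (-T) 0 := by
      simp [ContinuousLinearMap.neg_apply, hTξ₀]
    exact hξ₀ne (hinj this)
  refine ⟨hmem, ?_, ?_, ?_⟩
  · -- spectrum inclusion
    intro z hz
    obtain ⟨hre, hor⟩ := hgap z hz
    refine ⟨z.re, ?_, hre.symm⟩
    rcases hor with h1 | h1
    · exact Set.mem_union_left _ (by simp [h1])
    · exact Set.mem_union_right _ h1
  · -- the gap misses the spectrum
    apply Set.eq_empty_iff_forall_notMem.mpr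
    rintro z ⟨⟨r, hr, rfl⟩, hz⟩
    obtain ⟨hre, hor⟩ := hgap _ hz
    rw [Complex.ofReal_re] at hor
    rcases hor with h1 | h1
    · exact absurd h1 (ne_of_gt hr.1)
    · exact absurd h1 (not_le.mpr hr.2)
  · -- -bp is the least element
    constructor
    · exact hmem
    · intro r hr
      obtain ⟨_, hor⟩ := hgap (r : ℂ) hr
      rw [Complex.ofReal_re] at hor
      rcases hor with h1 | h1
      · exact le_of_eq h1.symm
      · linarith
end

section
/- For every natural number n, the function ψₙ : ℝ → ℝ defined by ψₙ(x) = Heₙ(√2·x)·exp(−x²/2), where Heₙ is the n-th probabilists' Hermite polynomial, satisfies the simple harmonic oscillator eigenvalue equation −ψₙ''(x) + x²·ψₙ(x) = (2n+1)·ψₙ(x) for all x ∈ ℝ. -/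
/-- The `n`-th harmonic oscillator eigenfunction
`ψₙ(x) = Heₙ(√2·x)·exp(-x²/2)`, where `Heₙ` is the `n`-th probabilists'
Hermite polynomial. -/
noncomputable def harmonicOscillatorEigenfunction (n : ℕ) (x : ℝ) : ℝ :=
  (Polynomial.aeval (Real.sqrt 2 * x) (Polynomial.hermite n)) * Real.exp (-x ^ 2 / 2)

open Polynomial Real

lemma hermite_derivative' (n : ℕ) :
    derivative (hermite (n + 1)) = ((n : Polynomial ℤ) + 1) * hermite n := by
  induction n with
  | zero => simp [hermite_one, hermite_zero]
  | succ n ih =>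
    have h := hermite_succ n
    rw [hermite_succ, derivative_sub, derivative_mul, derivative_X, one_mul, ih, h,
      derivative_mul]
    simp only [derivative_add, derivative_natCast, derivative_one, add_zero, zero_mul,
      zero_add]
    push_cast
    ring

lemma hermite_ode' (n : ℕ) :
    derivative (derivative (hermite n)) =
      X * derivative (hermite n) - (n : Polynomial ℤ) * hermite n := by
  cases n with
  | zero => simp
  | succ n =>
    rw [hermite_derivative' n, hermite_succ n, derivative_mul]
    simp only [derivative_add, derivative_natCast, derivative_one, add_zero, zero_mul,
      zero_add, derivative_sub, derivative_mul, derivative_X, one_mul]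
    push_cast
    ring

/-- The real Hermite polynomial. -/
noncomputable def HnAux (n : ℕ) : Polynomial ℝ := (hermite n).map (Int.castRingHom ℝ)

/-- The operator `p ↦ √2 p' - (√2)⁻¹ X p` implementing one derivative of
`x ↦ p(√2 x) exp(-x²/2)` on the polynomial part. -/
noncomputable def QopAux (p : Polynomial ℝ) : Polynomial ℝ :=
  Real.sqrt 2 • derivative p - (Real.sqrt 2)⁻¹ • (X * p)

lemma deriv_key (p : Polynomial ℝ) :
    deriv (fun x : ℝ => p.eval (Real.sqrt 2 * x) * Real.exp (-x ^ 2 / 2)) =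
      fun x : ℝ => (QopAux p).eval (Real.sqrt 2 * x) * Real.exp (-x ^ 2 / 2) := by
  funext x
  have h1 : HasDerivAt (fun x : ℝ => p.eval (Real.sqrt 2 * x))
      ((derivative p).eval (Real.sqrt 2 * x) * Real.sqrt 2) x := by
    have := (p.hasDerivAt (Real.sqrt 2 * x)).comp x
      ((hasDerivAt_id x).const_mul (Real.sqrt 2))
    simpa [Function.comp_def] using this
  have hinner : HasDerivAt (fun x : ℝ => -x ^ 2 / 2) (-x) x := by
    have := ((hasDerivAt_pow 2 x).neg.div_const 2)
    exact this.congr_deriv (by norm_num; ring)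
  have h2 : HasDerivAt (fun x : ℝ => Real.exp (-x ^ 2 / 2))
      (Real.exp (-x ^ 2 / 2) * (-x)) x := (Real.hasDerivAt_exp _).comp x hinner
  have h := (h1.mul h2).deriv
  rw [show (fun x : ℝ => p.eval (Real.sqrt 2 * x) * Real.exp (-x ^ 2 / 2)) =
    ((fun x : ℝ => p.eval (Real.sqrt 2 * x)) * fun x : ℝ => Real.exp (-x ^ 2 / 2)) from rfl, h]
  have hs : Real.sqrt 2 ≠ 0 := by positivity
  have hss : (Real.sqrt 2)⁻¹ * Real.sqrt 2 = 1 := inv_mul_cancel₀ hs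
  simp only [QopAux, eval_sub, eval_smul, eval_mul, eval_X, smul_eq_mul]
  field_simp
  ring

lemma HnAux_ode (n : ℕ) :
    derivative (derivative (HnAux n)) =
      X * derivative (HnAux n) - (n : Polynomial ℝ) * HnAux n := by
  simp [HnAux, derivative_map, hermite_ode' n, Polynomial.map_sub, Polynomial.map_mul,
    Polynomial.map_natCast]

/-- **Harmonic oscillator eigenvalue equation.**
For every `n`, the function `ψₙ(x) = Heₙ(√2·x)·exp(-x²/2)` satisfies
`-ψₙ'' + x²·ψₙ = (2n+1)·ψₙ`, substantiating that the simple harmonic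
oscillator Hamiltonian `-d²/dx² + x²` has spectrum `2ℕ + 1`. -/
theorem harmonicOscillator_eigenvalue_equation (n : ℕ) (x : ℝ) :
    -(deriv (deriv (harmonicOscillatorEigenfunction n)) x) +
      x ^ 2 * harmonicOscillatorEigenfunction n x =
        (2 * (n : ℝ) + 1) * harmonicOscillatorEigenfunction n x := by
  have hfun : harmonicOscillatorEigenfunction n
      = fun x : ℝ => (HnAux n).eval (Real.sqrt 2 * x) * Real.exp (-x ^ 2 / 2) := by
    funext y
    simp [harmonicOscillatorEigenfunction, HnAux, aeval_def, eval₂_eq_eval_map]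
  rw [hfun, deriv_key, deriv_key]
  have hCe : (derivative (derivative (HnAux n))).eval (Real.sqrt 2 * x)
      = (Real.sqrt 2 * x) * (derivative (HnAux n)).eval (Real.sqrt 2 * x)
        - (n : ℝ) * (HnAux n).eval (Real.sqrt 2 * x) := by
    rw [HnAux_ode]; simp
  simp only [QopAux, derivative_sub, derivative_smul, derivative_mul, derivative_X, one_mul,
    eval_sub, eval_smul, eval_mul, eval_X, eval_add, smul_eq_mul]
  rw [hCe]
  have hss : (Real.sqrt 2)⁻¹ * Real.sqrt 2 = 1 := inv_mul_cancel₀ (by positivity)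
  have h2 : Real.sqrt 2 * Real.sqrt 2 = 2 := Real.mul_self_sqrt (by norm_num)
  set A := (HnAux n).eval (Real.sqrt 2 * x)
  set B := (derivative (HnAux n)).eval (Real.sqrt 2 * x)
  linear_combination (Real.exp (-x^2/2) * (-(Real.sqrt 2 * x * B) + n * A)) * h2
    + (Real.exp (-x^2/2) * (A + 2 * Real.sqrt 2 * x * B
        - x^2 * A * ((Real.sqrt 2)⁻¹ * Real.sqrt 2) - x^2 * A)) * hss
end

section
/- Let h : ℝ → ℝ be continuous and suppose there exist R > 0 and ε > 0 such that h(x) ≥ ε for all x ≥ R and h(x) ≤ −ε for all x ≤ −R. Define f(x) = exp(−∫₀ˣ h(t)dt) and g(x) = exp(∫₀ˣ h(t)dt). Then f is differentiable with f'(x) + h(x)·f(x) = 0 for all x, and f is square-integrable on ℝ, whereas g is not square-integrable on ℝ. -/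
open MeasureTheory intervalIntegral Set

lemma integrableOn_exp_mul_Iic_aux {b : ℝ} (hb : 0 < b) (c : ℝ) :
    IntegrableOn (fun x : ℝ => Real.exp (b * x)) (Iic c) volume := by
  have A : MeasurableEmbedding fun x : ℝ => -x :=
    (Homeomorph.neg ℝ).isClosedEmbedding.measurableEmbedding
  have hmap : (volume : Measure ℝ) = Measure.map (fun x : ℝ => -x) volume :=
    (Measure.map_neg_eq_self _).symm
  rw [IntegrableOn, hmap, ← IntegrableOn, A.integrableOn_map_iff]
  have hpre : (fun x : ℝ => -x) ⁻¹' (Iic c) = Ici (-c) := by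
    ext x; simp [neg_le]
  rw [hpre]
  have := exp_neg_integrableOn_Ioi (-c) hb
  refine (integrableOn_Ici_iff_integrableOn_Ioi ?_).2 ?_
  · simp
  simpa [Function.comp_def, mul_neg, neg_mul] using this

/-- **Normalizable and non-normalizable Callias–Dirac ground states.**
If `h : ℝ → ℝ` is continuous, uniformly positive near `+∞` and uniformly
negative near `-∞`, then `f(x) = exp(-∫₀ˣ h)` solves `f' + h·f = 0` and is
square-integrable, whereas `g(x) = exp(∫₀ˣ h)` is not square-integrable. -/
theorem callias_ground_state (h : ℝ → ℝ) (hcont : Continuous h)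
    (R ε : ℝ) (hR : 0 < R) (hε : 0 < ε)
    (hplus : ∀ x : ℝ, R ≤ x → ε ≤ h x)
    (hminus : ∀ x : ℝ, x ≤ -R → h x ≤ -ε) :
    Differentiable ℝ (fun x : ℝ => Real.exp (-∫ t in (0 : ℝ)..x, h t)) ∧
    (∀ x : ℝ, deriv (fun x : ℝ => Real.exp (-∫ t in (0 : ℝ)..x, h t)) x +
      h x * Real.exp (-∫ t in (0 : ℝ)..x, h t) = 0) ∧
    MemLp (fun x : ℝ => Real.exp (-∫ t in (0 : ℝ)..x, h t)) 2 volume ∧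
    ¬ MemLp (fun x : ℝ => Real.exp (∫ t in (0 : ℝ)..x, h t)) 2 volume := by
  set H : ℝ → ℝ := fun x => ∫ t in (0 : ℝ)..x, h t with hHdef
  have hint : ∀ a b : ℝ, IntervalIntegrable h volume a b := fun a b =>
    hcont.intervalIntegrable a b
  have hderiv : ∀ x : ℝ, HasDerivAt H (h x) x := fun x =>
    (hcont.integral_hasStrictDerivAt 0 x).hasDerivAt
  have hHdiff : Differentiable ℝ H := fun x => (hderiv x).differentiableAt
  have hHcont : Continuous H := hHdiff.continuous
  have hfderiv : ∀ x : ℝ, HasDerivAt (fun x : ℝ => Real.exp (-H x))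
      (Real.exp (-H x) * (-h x)) x := fun x => ((hderiv x).neg).exp
  have hdiff : Differentiable ℝ (fun x : ℝ => Real.exp (-H x)) := fun x =>
    (hfderiv x).differentiableAt
  have hsplit : ∀ a x : ℝ, H x = H a + ∫ t in a..x, h t := by
    intro a x
    rw [hHdef]
    exact (integral_add_adjacent_intervals (hint 0 a) (hint a x)).symm
  have hH1 : ∀ x : ℝ, R ≤ x → H R + ε * (x - R) ≤ H x := by
    intro x hx
    have hmono : ∫ t in R..x, (ε : ℝ) ≤ ∫ t in R..x, h t :=
      integral_mono_on hx (intervalIntegrable_const) (hint R x)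
        (fun t ht => hplus t ht.1)
    rw [intervalIntegral.integral_const, smul_eq_mul] at hmono
    rw [hsplit R x]; nlinarith [hmono]
  have hH2 : ∀ x : ℝ, x ≤ -R → H (-R) + ε * (-R - x) ≤ H x := by
    intro x hx
    have hmono : ∫ t in x..(-R), h t ≤ ∫ t in x..(-R), (-ε : ℝ) :=
      integral_mono_on hx (hint x (-R)) (intervalIntegrable_const)
        (fun t ht => hminus t ht.2)
    rw [intervalIntegral.integral_const, smul_eq_mul] at hmono
    have := hsplit x (-R)
    nlinarith [hmono]
  refine ⟨hdiff, fun x => ?_, ?_, ?_⟩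
  · rw [(hfderiv x).deriv]; ring
  · -- Memℒp of f = exp (-H)
    have hfcont : Continuous (fun x : ℝ => Real.exp (-H x)) :=
      (hHcont.neg).rexp
    have hf2cont : Continuous (fun x : ℝ => Real.exp (-H x) ^ 2) := hfcont.pow 2
    have hexp2 : ∀ y : ℝ, Real.exp y ^ 2 = Real.exp (2 * y) := by
      intro y; rw [sq, ← Real.exp_add]; ring_nf
    have I1 : IntegrableOn (fun x : ℝ => Real.exp (-H x) ^ 2) (Icc (-R) R) volume :=
      hf2cont.integrableOn_Icc
    have I2 : IntegrableOn (fun x : ℝ => Real.exp (-H x) ^ 2) (Ioi R) volume := by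
      refine Integrable.mono'
        ((exp_neg_integrableOn_Ioi R (by positivity : (0:ℝ) < 2 * ε)).const_mul
          (Real.exp (-2 * H R + 2 * ε * R)))
        hf2cont.aestronglyMeasurable.restrict ?_
      filter_upwards [self_mem_ae_restrict (measurableSet_Ioi : MeasurableSet (Ioi R))]
        with x hx
      have hx' : R ≤ x := le_of_lt hx
      rw [Real.norm_eq_abs, abs_of_nonneg (by positivity), hexp2, ← Real.exp_add]
      apply Real.exp_le_exp.2
      have := hH1 x hx'
      nlinarith
    have I3 : IntegrableOn (fun x : ℝ => Real.exp (-H x) ^ 2) (Iic (-R)) volume := by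
      refine Integrable.mono'
        ((integrableOn_exp_mul_Iic_aux (by positivity : (0:ℝ) < 2 * ε) (-R)).const_mul
          (Real.exp (-2 * H (-R) + 2 * ε * R)))
        hf2cont.aestronglyMeasurable.restrict ?_
      filter_upwards [self_mem_ae_restrict (measurableSet_Iic : MeasurableSet (Iic (-R)))]
        with x hx
      have hx' : x ≤ -R := hx
      rw [Real.norm_eq_abs, abs_of_nonneg (by positivity), hexp2, ← Real.exp_add]
      apply Real.exp_le_exp.2
      have := hH2 x hx'
      nlinarith
    have hunion : Iic (-R) ∪ (Icc (-R) R ∪ Ioi R) = (univ : Set ℝ) := by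
      ext x
      simp only [mem_union, mem_Iic, mem_Icc, mem_Ioi, mem_univ, iff_true]
      rcases le_total x (-R) with h1 | h1
      · exact Or.inl h1
      · rcases le_or_gt x R with h2 | h2
        · exact Or.inr (Or.inl ⟨h1, h2⟩)
        · exact Or.inr (Or.inr h2)
    have hInt : Integrable (fun x : ℝ => Real.exp (-H x) ^ 2) volume := by
      rw [← integrableOn_univ, ← hunion]
      exact (I3.union (I1.union I2))
    exact (memLp_two_iff_integrable_sq hfcont.aestronglyMeasurable).2 hInt
  · -- g = exp H is not in L²
    intro hmem
    have hgcont : Continuous (fun x : ℝ => Real.exp (H x)) := hHcont.rexp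
    have hInt : Integrable (fun x : ℝ => Real.exp (H x) ^ 2) volume :=
      (memLp_two_iff_integrable_sq hgcont.aestronglyMeasurable).1 hmem
    have hcpos : (0 : ℝ) < Real.exp (H R) ^ 2 := by positivity
    have hsub : Ioi R ⊆ {x : ℝ | Real.exp (H R) ^ 2 ≤ Real.exp (H x) ^ 2} := by
      intro x hx
      have hx' : R ≤ x := le_of_lt hx
      have := hH1 x hx'
      have hle : H R ≤ H x := by nlinarith
      exact pow_le_pow_left₀ (Real.exp_pos _).le (Real.exp_le_exp.2 hle) 2
    have hfin := hInt.measure_ge_lt_top hcpos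
    have : volume (Ioi R) < ⊤ := lt_of_le_of_lt (measure_mono hsub) hfin
    simp [Real.volume_Ioi] at this
end
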